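/- Let f, g and h be entire functions given by everywhere absolutely convergent vector valued Dirichlet series, and let p ≥ 0, q ≥ 0, m ≥ 0 be integers. Assume f is of regular relative (m,q) Ritt growth with respect to h with 0 < λ_h^{(m,q)}(f) = ρ_h^{(m,q)}(f) < +∞, g is of regular relative (m,p) Ritt growth with respect to h with 0 < λ_h^{(m,p)}(g) = ρ_h^{(m,p)}(g) < +∞, and ρ_h^{(m,q)}(f) = ρ_h^{(m,p)}(g). Then λ_g^{(p,q)}(f) = ρ_g^{(p,q)}(f) = λ_f^{(q,p)}(g) = ρ_f^{(q,p)}(g) = 1. -/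

import Mathlib

open Filter Topology

noncomputable section

/-- An entire function given by an everywhere absolutely convergent
vector valued Dirichlet series, with coefficients in a Banach space `E`. -/
structure VVDS (E : Type*) [NormedAddCommGroup E] [NormedSpace ℂ E] [CompleteSpace E] where
  a : ℕ → E
  lam : ℕ → ℝ
  lam_pos : ∀ n, 0 < lam n
  lam_strictMono : StrictMono lam
  lam_tendsto : Tendsto lam atTop atTop
  log_index_bound : ∃ D : ℝ, ∀ᶠ n : ℕ in atTop, Real.log (n : ℝ) / lam n ≤ D
  coeff_decay : Tendsto (fun n => Real.log ‖a n‖ / lam n) atTop atBot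
  abs_conv : ∀ s : ℂ, Summable (fun n => Real.exp (s.re * lam n) * ‖a n‖)

variable {E F G : Type*} [NormedAddCommGroup E] [NormedSpace ℂ E] [CompleteSpace E]
  [NormedAddCommGroup F] [NormedSpace ℂ F] [CompleteSpace F]
  [NormedAddCommGroup G] [NormedSpace ℂ G] [CompleteSpace G]

/-- The entire function defined by the vector valued Dirichlet series. -/
def VVDS.toFun (f : VVDS E) (s : ℂ) : E := ∑' n, Complex.exp (s * (f.lam n : ℂ)) • f.a n

/-- The maximum modulus function `M_f(σ) = sup_t ‖f(σ+it)‖`. -/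
def VVDS.M (f : VVDS E) (σ : ℝ) : ℝ := ⨆ t : ℝ, ‖f.toFun ((σ : ℂ) + (t : ℂ) * Complex.I)‖

/-- The inverse function of the maximum modulus function. -/
def VVDS.Minv (f : VVDS E) (y : ℝ) : ℝ := sInf {σ : ℝ | y ≤ f.M σ}

/-- The (p,q)-th relative Ritt order of `f` with respect to `g`. -/
def relRittOrder (p q : ℕ) (f : VVDS E) (g : VVDS F) : EReal :=
  limsup (fun σ : ℝ =>
    ((Real.log^[p] (g.Minv (f.M σ)) / Real.log^[q] σ : ℝ) : EReal)) atTop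

/-- The (p,q)-th relative Ritt lower order of `f` with respect to `g`. -/
def relRittLowerOrder (p q : ℕ) (f : VVDS E) (g : VVDS F) : EReal :=
  liminf (fun σ : ℝ =>
    ((Real.log^[p] (g.Minv (f.M σ)) / Real.log^[q] σ : ℝ) : EReal)) atTop

/-- The (p,q)-th relative Ritt type of `f` with respect to `g`. -/
def relRittType (p q : ℕ) (f : VVDS E) (g : VVDS F) : EReal :=
  limsup (fun σ : ℝ =>
    ((Real.log^[p-1] (g.Minv (f.M σ)) /
      (Real.log^[q-1] σ) ^ (relRittOrder p q f g).toReal : ℝ) : EReal)) atTop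

/-- The (p,q)-th relative Ritt lower type of `f` with respect to `g`. -/
def relRittLowerType (p q : ℕ) (f : VVDS E) (g : VVDS F) : EReal :=
  liminf (fun σ : ℝ =>
    ((Real.log^[p-1] (g.Minv (f.M σ)) /
      (Real.log^[q-1] σ) ^ (relRittOrder p q f g).toReal : ℝ) : EReal)) atTop

/-- The (p,q)-th relative Ritt weak type of `f` with respect to `g`. -/
def relRittWeakType (p q : ℕ) (f : VVDS E) (g : VVDS F) : EReal :=
  liminf (fun σ : ℝ =>
    ((Real.log^[p-1] (g.Minv (f.M σ)) /
      (Real.log^[q-1] σ) ^ (relRittLowerOrder p q f g).toReal : ℝ) : EReal)) atTop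

/-- The growth indicator `τ̄_g^{(p,q)}(f)`. -/
def relRittUpperWeakType (p q : ℕ) (f : VVDS E) (g : VVDS F) : EReal :=
  limsup (fun σ : ℝ =>
    ((Real.log^[p-1] (g.Minv (f.M σ)) /
      (Real.log^[q-1] σ) ^ (relRittLowerOrder p q f g).toReal : ℝ) : EReal)) atTop

open MeasureTheory
open scoped ENNReal NNReal

namespace IterLog

lemma logIter_zero (k : ℕ) : Real.log^[k] 0 = 0 := by
  induction k with
  | zero => rfl
  | succ k ih => rw [Function.iterate_succ_apply, Real.log_zero, ih]

lemma logIter_exp (k : ℕ) (x : ℝ) : Real.log^[k] (Real.exp^[k] x) = x := by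
  induction k generalizing x with
  | zero => rfl
  | succ k ih =>
    rw [Function.iterate_succ_apply' (f := Real.exp), Function.iterate_succ_apply,
      Real.log_exp, ih]

lemma one_le_expIter (k : ℕ) : 1 ≤ Real.exp^[k] 1 := by
  induction k with
  | zero => exact le_refl _
  | succ k ih =>
    rw [Function.iterate_succ_apply']
    calc (1:ℝ) ≤ Real.exp^[k] 1 := ih
    _ ≤ Real.exp (Real.exp^[k] 1) := (Real.add_one_le_exp _).trans' (by linarith)
    

lemma logIter_le_logIter (k : ℕ) {x y : ℝ} (hx : Real.exp^[k] 1 ≤ x) (hxy : x ≤ y) :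
    Real.log^[k] x ≤ Real.log^[k] y := by
  induction k generalizing x y with
  | zero => exact hxy
  | succ k ih =>
    rw [Function.iterate_succ_apply' (f := Real.exp)] at hx
    have hx0 : 0 < x := lt_of_lt_of_le (Real.exp_pos _) hx
    rw [Function.iterate_succ_apply, Function.iterate_succ_apply]
    exact ih ((Real.le_log_iff_exp_le hx0).2 hx) (Real.log_le_log hx0 hxy)

lemma logIter_lt_logIter (k : ℕ) {x y : ℝ} (hx : Real.exp^[k] 1 ≤ x) (hxy : x < y) :
    Real.log^[k] x < Real.log^[k] y := by
  induction k generalizing x y with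
  | zero => exact hxy
  | succ k ih =>
    rw [Function.iterate_succ_apply' (f := Real.exp)] at hx
    have hx0 : 0 < x := lt_of_lt_of_le (Real.exp_pos _) hx
    rw [Function.iterate_succ_apply, Function.iterate_succ_apply]
    exact ih ((Real.le_log_iff_exp_le hx0).2 hx) (Real.log_lt_log hx0 hxy)

lemma le_logIter (k : ℕ) {x t : ℝ} (ht : 0 ≤ t) (hx : Real.exp^[k] t ≤ x) :
    t ≤ Real.log^[k] x := by
  induction k generalizing x t with
  | zero => exact hx
  | succ k ih =>
    rw [Function.iterate_succ_apply' (f := Real.exp)] at hx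
    have hx0 : 0 < x := lt_of_lt_of_le (Real.exp_pos _) hx
    rw [Function.iterate_succ_apply]
    have h1 : Real.exp^[k] t ≤ Real.log x := (Real.le_log_iff_exp_le hx0).2 hx
    exact ih ht h1

lemma tendsto_expIter (k : ℕ) : Tendsto (Real.exp^[k]) atTop atTop := by
  induction k with
  | zero => exact tendsto_id
  | succ k ih =>
    rw [Function.iterate_succ]
    exact ih.comp Real.tendsto_exp_atTop

lemma tendsto_logIter (k : ℕ) : Tendsto (Real.log^[k]) atTop atTop := by
  induction k with
  | zero => exact tendsto_id
  | succ k ih =>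
    rw [Function.iterate_succ]
    exact ih.comp Real.tendsto_log_atTop

end IterLog

namespace VVDS

/-- the majorant series -/
def A (f : VVDS E) (σ : ℝ) : ℝ := ∑' n, Real.exp (σ * f.lam n) * ‖f.a n‖

lemma summableA (f : VVDS E) (σ : ℝ) : Summable (fun n => Real.exp (σ * f.lam n) * ‖f.a n‖) := by
  simpa using f.abs_conv (σ : ℂ)

lemma norm_term (f : VVDS E) (s : ℂ) (n : ℕ) :
    ‖Complex.exp (s * (f.lam n : ℂ)) • f.a n‖ = Real.exp (s.re * f.lam n) * ‖f.a n‖ := by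
  rw [norm_smul, Complex.norm_exp]
  congr 2
  simp [Complex.mul_re]

lemma summable_term (f : VVDS E) (s : ℂ) :
    Summable (fun n => Complex.exp (s * (f.lam n : ℂ)) • f.a n) := by
  apply Summable.of_norm
  simp only [f.norm_term s]
  exact f.abs_conv s

lemma norm_toFun_le (f : VVDS E) (s : ℂ) : ‖f.toFun s‖ ≤ f.A s.re := by
  rw [VVDS.toFun, VVDS.A]
  have := norm_tsum_le_tsum_norm (f := fun n => Complex.exp (s * (f.lam n : ℂ)) • f.a n) ?_
  · simpa only [f.norm_term s] using this
  · simp only [f.norm_term s]; exact f.abs_conv s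

lemma norm_le_M (f : VVDS E) (σ t : ℝ) :
    ‖f.toFun ((σ : ℂ) + (t : ℂ) * Complex.I)‖ ≤ f.M σ := by
  apply le_ciSup_of_le ?_ t le_rfl
  refine ⟨f.A σ, ?_⟩
  rintro y ⟨t', rfl⟩
  have := f.norm_toFun_le ((σ : ℂ) + (t' : ℂ) * Complex.I)
  simpa using this

lemma M_nonneg (f : VVDS E) (σ : ℝ) : 0 ≤ f.M σ :=
  (norm_nonneg _).trans (f.norm_le_M σ 0)

lemma M_le_A (f : VVDS E) (σ : ℝ) : f.M σ ≤ f.A σ := by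
  apply ciSup_le
  intro t
  simpa using f.norm_toFun_le ((σ : ℂ) + (t : ℂ) * Complex.I)

lemma A_mono (f : VVDS E) : Monotone f.A := by
  intro x y hxy
  apply Summable.tsum_le_tsum _ (f.summableA x) (f.summableA y)
  intro n
  have := (f.lam_pos n).le
  apply mul_le_mul_of_nonneg_right _ (norm_nonneg _)
  exact Real.exp_le_exp.2 (by nlinarith)

lemma A_nonneg (f : VVDS E) (σ : ℝ) : 0 ≤ f.A σ :=
  tsum_nonneg (fun n => by positivity)

/-- the majorant gets small in the far left half plane -/
lemma A_small (f : VVDS E) {y : ℝ} (hy : 0 < y) : ∃ σ₀ : ℝ, ∀ σ ≤ σ₀, f.A σ < y := by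
  have hl0 := f.lam_pos 0
  -- A σ ≤ exp(σ λ0) * A 0 for σ ≤ 0
  have key : ∀ σ ≤ (0:ℝ), f.A σ ≤ Real.exp (σ * f.lam 0) * f.A 0 := by
    intro σ hσ
    rw [VVDS.A, VVDS.A, ← tsum_mul_left]
    apply Summable.tsum_le_tsum _ (f.summableA σ) ((f.summableA 0).mul_left _)
    intro n
    have h1 : Real.exp (σ * f.lam n) ≤ Real.exp (σ * f.lam 0) := by
      apply Real.exp_le_exp.2
      have := f.lam_strictMono.monotone (Nat.zero_le n)
      nlinarith
    calc Real.exp (σ * f.lam n) * ‖f.a n‖ ≤ Real.exp (σ * f.lam 0) * ‖f.a n‖ := by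
            gcongr
      _ = Real.exp (σ * f.lam 0) * (Real.exp (0 * f.lam n) * ‖f.a n‖) := by simp
  -- choose σ₀ with exp(σ₀ λ0) * A 0 < y
  have htend : Tendsto (fun σ : ℝ => Real.exp (σ * f.lam 0) * f.A 0) atBot (𝓝 (0 * f.A 0)) := by
    apply Tendsto.mul_const
    apply Real.tendsto_exp_atBot.comp
    exact (tendsto_atBot_atBot_of_monotone (fun x y hxy => by nlinarith [hl0.le])
      (fun b => ⟨b / f.lam 0, le_of_eq (div_mul_cancel₀ b hl0.ne')⟩))
  rw [zero_mul] at htend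
  have := htend.eventually_lt_const hy
  rw [eventually_atBot] at this
  obtain ⟨σ₁, hσ₁⟩ := this
  refine ⟨min σ₁ 0, fun σ hσ => ?_⟩
  exact lt_of_le_of_lt (key σ (hσ.trans (min_le_right _ _))) (hσ₁ _ (hσ.trans (min_le_left _ _)))


lemma exists_gap (f : VVDS E) (n : ℕ) :
    ∃ δ : ℝ, 0 < δ ∧ ∀ k, k ≠ n → δ ≤ |f.lam k - f.lam n| := by
  have mono := f.lam_strictMono.monotone
  match n with
  | 0 =>
    refine ⟨f.lam 1 - f.lam 0, sub_pos.2 (f.lam_strictMono Nat.zero_lt_one), fun k hk => ?_⟩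
    have hk1 : 1 ≤ k := Nat.one_le_iff_ne_zero.2 hk
    have h1 : f.lam 1 ≤ f.lam k := mono hk1
    have h0 : f.lam 0 < f.lam 1 := f.lam_strictMono Nat.zero_lt_one
    rw [abs_of_nonneg (by linarith)]
    linarith
  | (m+1) =>
    refine ⟨min (f.lam (m+2) - f.lam (m+1)) (f.lam (m+1) - f.lam m),
      lt_min (sub_pos.2 (f.lam_strictMono (Nat.lt_succ_self _)))
        (sub_pos.2 (f.lam_strictMono (Nat.lt_succ_self _))), fun k hk => ?_⟩
    rcases lt_or_gt_of_ne hk with hlt | hgt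
    · have hle : k ≤ m := Nat.lt_succ_iff.1 hlt
      have h1 : f.lam k ≤ f.lam m := mono hle
      have h2 : f.lam m < f.lam (m+1) := f.lam_strictMono (Nat.lt_succ_self _)
      rw [abs_of_nonpos (by linarith)]
      have := min_le_right (f.lam (m+2) - f.lam (m+1)) (f.lam (m+1) - f.lam m)
      linarith
    · have hge : m + 2 ≤ k := hgt
      have h1 : f.lam (m+2) ≤ f.lam k := mono hge
      have h2 : f.lam (m+1) < f.lam (m+2) := f.lam_strictMono (Nat.lt_succ_self _)
      rw [abs_of_nonneg (by linarith)]
      have := min_le_left (f.lam (m+2) - f.lam (m+1)) (f.lam (m+1) - f.lam m)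
      linarith

lemma coeff_le_M (f : VVDS E) (n : ℕ) (σ : ℝ) :
    Real.exp (σ * f.lam n) * ‖f.a n‖ ≤ f.M σ := by
  classical
  obtain ⟨δ, hδ, hgap⟩ := f.exists_gap n
  set K : ℝ := (2 / δ) * f.A σ with hK
  have hA0 := f.A_nonneg σ
  have hK0 : 0 ≤ K := by positivity
  -- the key estimate for every T > 0
  have key : ∀ T : ℝ, 0 < T →
      2 * T * (Real.exp (σ * f.lam n) * ‖f.a n‖) ≤ 2 * T * f.M σ + K := by
    intro T hT
    set g : ℕ → ℝ → E := fun k t =>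
      (Complex.exp ((σ * f.lam k : ℝ) : ℂ) *
        Complex.exp (Complex.I * ((f.lam k - f.lam n : ℝ) : ℂ) * (t : ℝ))) • f.a k with hg
    have hre0 : ∀ (d t : ℝ), (Complex.I * ((d : ℝ) : ℂ) * ((t : ℝ) : ℂ)).re = 0 := by
      intro d t
      simp [Complex.mul_re]
    have hnormg : ∀ k t, ‖g k t‖ = Real.exp (σ * f.lam k) * ‖f.a k‖ := by
      intro k t
      simp only [hg, norm_smul, norm_mul, Complex.norm_exp]
      rw [Complex.ofReal_re, hre0, Real.exp_zero, mul_one]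
    have hgcont : ∀ k, Continuous (g k) := by
      intro k
      apply Continuous.smul _ continuous_const
      apply Continuous.mul continuous_const
      exact Complex.continuous_exp.comp (by continuity)
    have hsummable_unif : Summable (fun k => Real.exp (σ * f.lam k) * ‖f.a k‖) := f.summableA σ
    have hphicont : Continuous (fun t => ∑' k, g k t) := by
      apply continuous_tsum hgcont hsummable_unif
      intro k t
      rw [hnormg]
    have hphi : ∀ t : ℝ, (∑' k, g k t) =
        Complex.exp (-(Complex.I * ((f.lam n : ℝ) : ℂ)) * (t : ℝ)) •
          f.toFun ((σ : ℂ) + (t : ℂ) * Complex.I) := by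
      intro t
      have step1 : ∀ k : ℕ, g k t =
          Complex.exp (-(Complex.I * ((f.lam n : ℝ) : ℂ)) * (t : ℝ)) •
            (Complex.exp (((σ : ℂ) + (t : ℂ) * Complex.I) * (f.lam k : ℂ)) • f.a k) := by
        intro k
        simp only [hg, smul_smul]
        congr 1
        rw [← Complex.exp_add, ← Complex.exp_add]
        congr 1
        push_cast
        ring
      rw [tsum_congr step1, Summable.tsum_const_smul _ (f.summable_term _)]
      rfl
    have hμfin : volume (Set.Ioc (-T) T) < ⊤ := by
      rw [Real.volume_Ioc]
      exact ENNReal.ofReal_lt_top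
    have hvol : (volume (Set.Ioc (-T) T)).toReal = 2 * T := by
      rw [Real.volume_Ioc, ENNReal.toReal_ofReal (by linarith)]
      ring
    -- interchange integral and sum
    have hinter : ∫ t in Set.Ioc (-T) T, (∑' k, g k t) = ∑' k, ∫ t in Set.Ioc (-T) T, g k t := by
      apply integral_tsum
      · exact fun k => ((hgcont k).aestronglyMeasurable)
      · have hcalc : ∀ k : ℕ, ∫⁻ t in Set.Ioc (-T) T, ‖g k t‖ₑ =
            ENNReal.ofReal (Real.exp (σ * f.lam k) * ‖f.a k‖) * volume (Set.Ioc (-T) T) := by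
          intro k
          have hc : ∀ t : ℝ, ‖g k t‖ₑ =
              ENNReal.ofReal (Real.exp (σ * f.lam k) * ‖f.a k‖) := by
            intro t
            rw [← hnormg k t, ofReal_norm]
          simp only [hc]
          rw [MeasureTheory.lintegral_const]
          simp
        simp only [hcalc]
        rw [ENNReal.tsum_mul_right]
        apply ENNReal.mul_ne_top _ hμfin.ne
        rw [← ENNReal.ofReal_tsum_of_nonneg (fun k => by positivity) hsummable_unif]
        exact ENNReal.ofReal_ne_top
    -- bound the full integral
    have hLHS : ‖∫ t in Set.Ioc (-T) T, (∑' k, g k t)‖ ≤ f.M σ * (2 * T) := by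
      rw [← hvol]
      apply norm_setIntegral_le_of_norm_le_const hμfin
      · intro t _
        rw [hphi t, norm_smul]
        have h1 : ‖Complex.exp (-(Complex.I * ((f.lam n : ℝ) : ℂ)) * (t : ℝ))‖ = 1 := by
          rw [Complex.norm_exp]
          have h2 : (-(Complex.I * ((f.lam n : ℝ) : ℂ)) * ((t:ℝ) : ℂ)).re = 0 := by
            simp [Complex.mul_re]
          rw [h2, Real.exp_zero]
        rw [h1, one_mul]
        exact f.norm_le_M σ t
    -- evaluate the n-th integral
    have hIn : ∫ t in Set.Ioc (-T) T, g n t =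
        (2 * T : ℝ) • (Complex.exp ((σ * f.lam n : ℝ) : ℂ) • f.a n) := by
      have hcn : ∀ t : ℝ, g n t = Complex.exp ((σ * f.lam n : ℝ) : ℂ) • f.a n := by
        intro t
        simp [hg]
      simp only [hcn]
      rw [MeasureTheory.setIntegral_const, measureReal_def, hvol]
    have hInnorm : ‖∫ t in Set.Ioc (-T) T, g n t‖ =
        2 * T * (Real.exp (σ * f.lam n) * ‖f.a n‖) := by
      rw [hIn, norm_smul, norm_smul, Complex.norm_exp, Complex.ofReal_re,
        Real.norm_eq_abs, abs_of_pos (by linarith)]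
    -- bound the k ≠ n integrals
    have hIk : ∀ k, k ≠ n → ‖∫ t in Set.Ioc (-T) T, g k t‖ ≤
        (2 / δ) * (Real.exp (σ * f.lam k) * ‖f.a k‖) := by
      intro k hk
      have hΔ : (f.lam k - f.lam n) ≠ 0 := by
        intro hcon
        have := hgap k hk
        rw [hcon, abs_zero] at this
        linarith
      set c : ℂ := Complex.I * ((f.lam k - f.lam n : ℝ) : ℂ) with hc
      have hc0 : c ≠ 0 := by
        apply mul_ne_zero Complex.I_ne_zero
        exact_mod_cast hΔ
      have hrw : ∫ t in Set.Ioc (-T) T, g k t =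
          (Complex.exp ((σ * f.lam k : ℝ) : ℂ) *
            ∫ t in Set.Ioc (-T) T, Complex.exp (c * (t : ℝ))) • f.a k := by
        simp only [hg]
        rw [← MeasureTheory.integral_const_mul, ← integral_smul_const]
      rw [hrw]
      have hval : ∫ t in Set.Ioc (-T) T, Complex.exp (c * (t : ℝ)) =
          (Complex.exp (c * (T : ℝ)) - Complex.exp (c * ((-T : ℝ) : ℂ))) / c := by
        rw [← intervalIntegral.integral_of_le (by linarith : -T ≤ T)]
        exact integral_exp_mul_complex hc0
      have habs1 : ∀ z : ℂ, (c * z).re = 0 → ‖Complex.exp (c * z)‖ = 1 := by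
        intro z hz
        rw [Complex.norm_exp, hz, Real.exp_zero]
      have hnum : ‖(Complex.exp (c * (T : ℝ)) - Complex.exp (c * ((-T : ℝ) : ℂ))) / c‖ ≤ 2 / δ := by
        rw [norm_div]
        have h1 : ‖Complex.exp (c * (T : ℝ)) - Complex.exp (c * ((-T : ℝ) : ℂ))‖ ≤ 2 := by
          calc ‖Complex.exp (c * (T : ℝ)) - Complex.exp (c * ((-T : ℝ) : ℂ))‖
              ≤ ‖Complex.exp (c * ((T : ℝ) : ℂ))‖ + ‖Complex.exp (c * ((-T : ℝ) : ℂ))‖ :=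
                norm_sub_le _ _
            _ = 2 := by
                rw [habs1 _ (by rw [hc]; simpa using hre0 (f.lam k - f.lam n) T),
                  habs1 _ (by rw [hc]; simpa using hre0 (f.lam k - f.lam n) (-T))]
                norm_num
        have h2 : δ ≤ ‖c‖ := by
          rw [hc, norm_mul, Complex.norm_I, one_mul,
            Complex.norm_real, Real.norm_eq_abs]
          exact hgap k hk
        exact div_le_div₀ (by norm_num) h1 hδ h2
      rw [hval, norm_smul, norm_mul, Complex.norm_exp, Complex.ofReal_re]
      calc Real.exp (σ * f.lam k) *
            ‖(Complex.exp (c * (T : ℝ)) - Complex.exp (c * ((-T : ℝ) : ℂ))) / c‖ * ‖f.a k‖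
          ≤ Real.exp (σ * f.lam k) * (2 / δ) * ‖f.a k‖ := by
            apply mul_le_mul_of_nonneg_right _ (norm_nonneg _)
            exact mul_le_mul_of_nonneg_left hnum (Real.exp_pos _).le
        _ = (2 / δ) * (Real.exp (σ * f.lam k) * ‖f.a k‖) := by ring
    -- summability of the integrals
    have hIsummable : Summable (fun k => ∫ t in Set.Ioc (-T) T, g k t) := by
      apply Summable.of_norm_bounded
        (g := fun k => (Real.exp (σ * f.lam k) * ‖f.a k‖) * (2 * T))
        (hsummable_unif.mul_right _)
      intro k
      rw [← hvol]
      apply norm_setIntegral_le_of_norm_le_const hμfin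
      · intro t _
        exact (hnormg k t).le
    -- norm bound for the tail sum
    have htail : ‖∑' k : ℕ, (if k = n then 0 else ∫ t in Set.Ioc (-T) T, g k t)‖ ≤ K := by
      have hbdd : ∀ k : ℕ, ‖(if k = n then 0 else ∫ t in Set.Ioc (-T) T, g k t)‖ ≤
          (2 / δ) * (Real.exp (σ * f.lam k) * ‖f.a k‖) := by
        intro k
        by_cases hk : k = n
        · rw [if_pos hk, norm_zero]
          have h1 : (0:ℝ) ≤ 2/δ := div_nonneg (by norm_num) hδ.le
          have h2 : (0:ℝ) ≤ Real.exp (σ * f.lam k) * ‖f.a k‖ := by positivity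
          exact mul_nonneg h1 h2
        · rw [if_neg hk]
          exact hIk k hk
      have hsumb : Summable (fun k => (2 / δ) * (Real.exp (σ * f.lam k) * ‖f.a k‖)) :=
        hsummable_unif.mul_left _
      calc ‖∑' k : ℕ, (if k = n then 0 else ∫ t in Set.Ioc (-T) T, g k t)‖
          ≤ ∑' k : ℕ, ‖(if k = n then 0 else ∫ t in Set.Ioc (-T) T, g k t)‖ :=
            norm_tsum_le_tsum_norm (hsumb.of_nonneg_of_le (fun k => norm_nonneg _) hbdd)
        _ ≤ ∑' k : ℕ, (2 / δ) * (Real.exp (σ * f.lam k) * ‖f.a k‖) :=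
            Summable.tsum_le_tsum hbdd (hsumb.of_nonneg_of_le (fun k => norm_nonneg _) hbdd) hsumb
        _ = K := by rw [hK, VVDS.A, tsum_mul_left]
    -- assemble
    have hsplit : (∑' k, ∫ t in Set.Ioc (-T) T, g k t) =
        (∫ t in Set.Ioc (-T) T, g n t) +
          ∑' k : ℕ, (if k = n then 0 else ∫ t in Set.Ioc (-T) T, g k t) :=
      hIsummable.tsum_eq_add_tsum_ite n
    have hfinal : 2 * T * (Real.exp (σ * f.lam n) * ‖f.a n‖) ≤
        ‖∫ t in Set.Ioc (-T) T, (∑' k, g k t)‖ + K := by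
      rw [← hInnorm]
      have : (∫ t in Set.Ioc (-T) T, g n t) =
          (∑' k, ∫ t in Set.Ioc (-T) T, g k t) -
            ∑' k : ℕ, (if k = n then 0 else ∫ t in Set.Ioc (-T) T, g k t) := by
        rw [hsplit]; abel
      rw [this, ← hinter]
      calc ‖(∫ t in Set.Ioc (-T) T, (∑' k, g k t)) -
            ∑' k : ℕ, (if k = n then 0 else ∫ t in Set.Ioc (-T) T, g k t)‖
          ≤ ‖∫ t in Set.Ioc (-T) T, (∑' k, g k t)‖ +
            ‖∑' k : ℕ, (if k = n then 0 else ∫ t in Set.Ioc (-T) T, g k t)‖ := norm_sub_le _ _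
        _ ≤ ‖∫ t in Set.Ioc (-T) T, (∑' k, g k t)‖ + K := by linarith
    calc 2 * T * (Real.exp (σ * f.lam n) * ‖f.a n‖)
        ≤ ‖∫ t in Set.Ioc (-T) T, (∑' k, g k t)‖ + K := hfinal
      _ ≤ f.M σ * (2 * T) + K := by linarith
      _ = 2 * T * f.M σ + K := by ring
  -- let T → ∞
  by_contra hcon
  push_neg at hcon
  set x : ℝ := Real.exp (σ * f.lam n) * ‖f.a n‖ - f.M σ with hx
  have hx0 : 0 < x := by rw [hx]; linarith
  have hT : (0:ℝ) < K / x + 1 := by positivity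
  have h2 := key (K / x + 1) hT
  have hdiv : K < x * (K / x + 1) := by
    rw [mul_add, mul_one, mul_div_cancel₀ _ hx0.ne']
    linarith
  nlinarith [hT]


/-- nonzero series have M tending to infinity -/
lemma M_tendsto (f : VVDS E) (hne : ∃ k, f.a k ≠ 0) : Tendsto f.M atTop atTop := by
  obtain ⟨k, hk⟩ := hne
  have hka : 0 < ‖f.a k‖ := norm_pos_iff.2 hk
  apply tendsto_atTop_mono (fun σ => f.coeff_le_M k σ)
  have h1 : Tendsto (fun σ : ℝ => Real.exp (σ * f.lam k)) atTop atTop := by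
    apply Real.tendsto_exp_atTop.comp
    exact Tendsto.atTop_mul_const (f.lam_pos k) tendsto_id
  exact h1.atTop_mul_const hka

lemma bddBelow_S (f : VVDS E) {y : ℝ} (hy : 0 < y) : BddBelow {σ : ℝ | y ≤ f.M σ} := by
  obtain ⟨σ₀, hσ₀⟩ := f.A_small hy
  refine ⟨σ₀, fun v hv => ?_⟩
  by_contra hcon
  push_neg at hcon
  have h1 : f.M v < y := lt_of_le_of_lt (f.M_le_A v) (hσ₀ v hcon.le)
  exact absurd hv (by simp only [Set.mem_setOf_eq]; linarith)

lemma nonempty_S (f : VVDS E) (hMf : Tendsto f.M atTop atTop) (y : ℝ) :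
    {σ : ℝ | y ≤ f.M σ}.Nonempty :=
  (hMf.eventually_ge_atTop y).exists

lemma Minv_le (f : VVDS E) {y V : ℝ} (hy : 0 < y) (hV : y ≤ f.M V) : f.Minv y ≤ V :=
  csInf_le (f.bddBelow_S hy) hV

lemma le_Minv (f : VVDS E) (hMf : Tendsto f.M atTop atTop) {y R : ℝ} (hy : 0 < y)
    (hR : f.A R < y) : R ≤ f.Minv y := by
  apply le_csInf (f.nonempty_S hMf y)
  intro v hv
  by_contra hcon
  push_neg at hcon
  have h1 : f.A v ≤ f.A R := f.A_mono hcon.le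
  have h2 : y ≤ f.A v := le_trans hv (f.M_le_A v)
  linarith

lemma Minv_mono (f : VVDS E) (hMf : Tendsto f.M atTop atTop) {y₁ y₂ : ℝ} (hy₁ : 0 < y₁)
    (hy : y₁ ≤ y₂) : f.Minv y₁ ≤ f.Minv y₂ := by
  apply csInf_le_csInf (f.bddBelow_S hy₁) (f.nonempty_S hMf y₂)
  intro v hv
  exact le_trans hy hv

/-- the composed inverse tends to infinity -/
lemma Minv_comp_tendsto (f : VVDS E) (g : VVDS F) (hMf : Tendsto f.M atTop atTop)
    (hMg : Tendsto g.M atTop atTop) :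
    Tendsto (fun σ => g.Minv (f.M σ)) atTop atTop := by
  rw [tendsto_atTop]
  intro R
  have h1 : ∀ᶠ σ : ℝ in atTop, max (g.A R) 0 < f.M σ := hMf.eventually_gt_atTop _
  filter_upwards [h1] with σ hσ
  exact g.le_Minv hMg (lt_of_le_of_lt (le_max_right _ _) hσ)
    (lt_of_le_of_lt (le_max_left _ _) hσ)

/-- if all coefficients vanish, M is identically 0 -/
lemma M_zero (f : VVDS E) (hz : ∀ k, f.a k = 0) : ∀ σ, f.M σ = 0 := by
  intro σ
  have h1 : ∀ s, f.toFun s = 0 := by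
    intro s
    rw [VVDS.toFun]
    simp [hz]
  rw [VVDS.M]
  simp only [h1, norm_zero]
  exact ciSup_const

lemma sInf_univ_real : sInf (Set.univ : Set ℝ) = 0 := by
  apply Real.sInf_of_not_bddBelow
  rintro ⟨b, hb⟩
  have := hb (Set.mem_univ (b - 1))
  linarith


open IterLog in
theorem key_tendsto (f : VVDS E) (g : VVDS F) (h : VVDS G) (p q m : ℕ) {ρ : ℝ} (hρ : 0 < ρ)
    (hφ : Tendsto (fun σ : ℝ => Real.log^[m] (h.Minv (f.M σ)) / Real.log^[q] σ) atTop (𝓝 ρ))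
    (hψ : Tendsto (fun σ : ℝ => Real.log^[m] (h.Minv (g.M σ)) / Real.log^[p] σ) atTop (𝓝 ρ)) :
    Tendsto (fun σ : ℝ => Real.log^[p] (g.Minv (f.M σ)) / Real.log^[q] σ) atTop (𝓝 1) := by
  -- none of the three series can vanish identically
  have hMinv_zero : ∀ σ : ℝ, f.M σ = 0 → (∀ τ, h.M τ = 0) → True := fun _ _ _ => trivial
  have hh_ne : ∃ k, h.a k ≠ 0 := by
    by_contra hcon
    push_neg at hcon
    have hM0 := h.M_zero hcon
    have hzero : ∀ σ : ℝ, h.Minv (f.M σ) = 0 := by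
      intro σ
      rcases eq_or_lt_of_le (f.M_nonneg σ) with hy | hy
      · have : {v : ℝ | f.M σ ≤ h.M v} = Set.univ := by
          ext v
          simp only [Set.mem_setOf_eq, Set.mem_univ, iff_true]
          rw [← hy, hM0 v]
        rw [VVDS.Minv, this, VVDS.sInf_univ_real]
      · have : {v : ℝ | f.M σ ≤ h.M v} = ∅ := by
          ext v
          simp only [Set.mem_setOf_eq, Set.mem_empty_iff_false, iff_false, not_le, hM0 v]
          exact hy
        rw [VVDS.Minv, this, Real.sInf_empty]
    have hφ0 : Tendsto (fun _ : ℝ => (0:ℝ)) atTop (𝓝 ρ) := by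
      apply hφ.congr
      intro σ
      rw [hzero σ, logIter_zero, zero_div]
    exact absurd (tendsto_nhds_unique hφ0 tendsto_const_nhds) (by linarith)
  have hf_ne : ∃ k, f.a k ≠ 0 := by
    by_contra hcon
    push_neg at hcon
    have hM0 := f.M_zero hcon
    have hzero : ∀ σ : ℝ, h.Minv (f.M σ) = 0 := by
      intro σ
      have : {v : ℝ | f.M σ ≤ h.M v} = Set.univ := by
        ext v
        simp [hM0 σ, h.M_nonneg v]
      rw [VVDS.Minv, this, VVDS.sInf_univ_real]
    have hφ0 : Tendsto (fun _ : ℝ => (0:ℝ)) atTop (𝓝 ρ) := by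
      apply hφ.congr
      intro σ
      rw [hzero σ, logIter_zero, zero_div]
    exact absurd (tendsto_nhds_unique hφ0 tendsto_const_nhds) (by linarith)
  have hg_ne : ∃ k, g.a k ≠ 0 := by
    by_contra hcon
    push_neg at hcon
    have hM0 := g.M_zero hcon
    have hzero : ∀ σ : ℝ, h.Minv (g.M σ) = 0 := by
      intro σ
      have : {v : ℝ | g.M σ ≤ h.M v} = Set.univ := by
        ext v
        simp [hM0 σ, h.M_nonneg v]
      rw [VVDS.Minv, this, VVDS.sInf_univ_real]
    have hψ0 : Tendsto (fun _ : ℝ => (0:ℝ)) atTop (𝓝 ρ) := by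
      apply hψ.congr
      intro σ
      rw [hzero σ, logIter_zero, zero_div]
    exact absurd (tendsto_nhds_unique hψ0 tendsto_const_nhds) (by linarith)
  have hMf := f.M_tendsto hf_ne
  have hMg := g.M_tendsto hg_ne
  have hMh := h.M_tendsto hh_ne
  have hwf := VVDS.Minv_comp_tendsto f h hMf hMh
  have hwg := VVDS.Minv_comp_tendsto g h hMg hMh
  have hv := VVDS.Minv_comp_tendsto f g hMf hMg
  have hLq : Tendsto (fun σ : ℝ => Real.log^[q] σ) atTop atTop := tendsto_logIter q
  have hLp : Tendsto (fun σ : ℝ => Real.log^[p] σ) atTop atTop := tendsto_logIter p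
  rw [tendsto_order]
  constructor
  · -- lower bound part
    intro b hb
    set k' : ℝ := max b (1/2) with hk'def
    have hk'1 : k' < 1 := max_lt hb (by norm_num)
    have hk'0 : 0 < k' := lt_of_lt_of_le (by norm_num) (le_max_right _ _)
    set ε : ℝ := ρ * (1 - k') / (k' + 3) with hεdef
    have hεpos : 0 < ε := by
      apply div_pos (mul_pos hρ (by linarith)) (by linarith)
    have hεe : ε * (k' + 3) = ρ * (1 - k') := by
      rw [hεdef]
      field_simp
    have hε2 : 2 * ε < ρ := by nlinarith
    set β : ℝ := (ρ - 2*ε)/(ρ + ε) with hβdef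
    have hρε : 0 < ρ + ε := by linarith
    have hβpos : 0 < β := div_pos (by linarith) hρε
    have hβe : β * (ρ + ε) = ρ - 2*ε := div_mul_cancel₀ _ hρε.ne'
    have hβk : k' < β := by
      rw [hβdef, lt_div_iff₀ hρε]
      nlinarith
    -- thresholds from ψ
    have hT₁' : ∀ᶠ u : ℝ in atTop,
        Real.log^[m] (h.Minv (g.M u)) ≤ (ρ + ε) * Real.log^[p] u ∧
        Real.exp^[p] 1 ≤ u := by
      have e1 := hψ.eventually (eventually_le_nhds (by linarith : ρ < ρ + ε))
      have e2 := hLp.eventually_gt_atTop 0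
      have e3 : ∀ᶠ u : ℝ in atTop, Real.exp^[p] 1 ≤ u := eventually_ge_atTop _
      filter_upwards [e1, e2, e3] with u h1 h2 h3
      refine ⟨?_, h3⟩
      rw [div_le_iff₀ h2] at h1
      linarith [h1]
    obtain ⟨T₁, hT₁⟩ := eventually_atTop.1 hT₁'
    set C : ℝ := g.A T₁ with hCdef
    filter_upwards [hLq.eventually_gt_atTop 0,
      hφ.eventually (eventually_ge_nhds (by linarith : ρ - ε < ρ)),
      hMf.eventually_gt_atTop (max C 0),
      hwf.eventually_ge_atTop (Real.exp^[m] 1)] with σ h1 h2 h3 h4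
    have hMfσ : 0 < f.M σ := lt_of_le_of_lt (le_max_right C 0) h3
    have hwfb : (ρ - ε) * Real.log^[q] σ ≤ Real.log^[m] (h.Minv (f.M σ)) := by
      rw [le_div_iff₀ h1] at h2
      linarith [h2]
    have hlb : ∀ v ∈ {v : ℝ | f.M σ ≤ g.M v}, Real.exp^[p] (β * Real.log^[q] σ) ≤ v := by
      intro v hv'
      simp only [Set.mem_setOf_eq] at hv'
      have hvT : T₁ ≤ v := by
        by_contra hcon
        push_neg at hcon
        have hgel : g.M v ≤ C := le_trans (g.M_le_A v) (g.A_mono hcon.le)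
        have := lt_of_le_of_lt (le_max_left C 0) h3
        linarith
      obtain ⟨hψv, hEv⟩ := hT₁ v hvT
      have hmono : h.Minv (f.M σ) ≤ h.Minv (g.M v) := h.Minv_mono hMh hMfσ hv'
      have hlog : Real.log^[m] (h.Minv (f.M σ)) ≤ Real.log^[m] (h.Minv (g.M v)) :=
        logIter_le_logIter m h4 hmono
      have hchain : (ρ - ε) * Real.log^[q] σ ≤ (ρ + ε) * Real.log^[p] v :=
        le_trans hwfb (le_trans hlog hψv)
      by_contra hcon
      push_neg at hcon
      have hstrict : Real.log^[p] v < β * Real.log^[q] σ := by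
        have := logIter_lt_logIter p hEv hcon
        rwa [logIter_exp] at this
      nlinarith [mul_lt_mul_of_pos_left hstrict hρε]
    have hrlow : Real.exp^[p] (β * Real.log^[q] σ) ≤ g.Minv (f.M σ) :=
      le_csInf (g.nonempty_S hMg _) hlb
    have hfin : β * Real.log^[q] σ ≤ Real.log^[p] (g.Minv (f.M σ)) :=
      le_logIter p (mul_nonneg hβpos.le h1.le) hrlow
    have : β ≤ Real.log^[p] (g.Minv (f.M σ)) / Real.log^[q] σ := by
      rw [le_div_iff₀ h1]
      linarith
    calc b ≤ k' := le_max_left _ _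
      _ < β := hβk
      _ ≤ _ := this
  · -- upper bound part
    intro b hb
    set ε : ℝ := ρ * (b - 1) / (b + 3) with hεdef
    have hεpos : 0 < ε := div_pos (mul_pos hρ (by linarith)) (by linarith)
    have hεe : ε * (b + 3) = ρ * (b - 1) := by
      rw [hεdef]
      field_simp
    have hερ : ε < ρ := by nlinarith
    have hρε : 0 < ρ - ε := by linarith
    set α : ℝ := (ρ + 2*ε)/(ρ - ε) with hαdef
    have hα0 : 0 < α := div_pos (by linarith) hρε
    have hαe : (ρ - ε) * α = ρ + 2*ε := mul_div_cancel₀ _ hρε.ne'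
    have hαb : α < b := by
      rw [hαdef, div_lt_iff₀ hρε]
      nlinarith
    set u : ℝ → ℝ := fun σ => Real.exp^[p] (α * Real.log^[q] σ) with hudef
    have hu : Tendsto u atTop atTop := (tendsto_expIter p).comp (hLq.const_mul_atTop hα0)
    have P1 : ∀ᶠ w : ℝ in atTop,
        (ρ - ε) * Real.log^[p] w ≤ Real.log^[m] (h.Minv (g.M w)) ∧
        Real.exp^[m] 1 ≤ h.Minv (g.M w) ∧ 0 < g.M w := by
      have e1 := hψ.eventually (eventually_ge_nhds (by linarith : ρ - ε < ρ))
      have e2 := hLp.eventually_gt_atTop 0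
      have e3 := hwg.eventually_ge_atTop (Real.exp^[m] 1)
      have e4 := hMg.eventually_gt_atTop 0
      filter_upwards [e1, e2, e3, e4] with w h1 h2 h3 h4
      refine ⟨?_, h3, h4⟩
      rw [le_div_iff₀ h2] at h1
      linarith [h1]
    filter_upwards [hLq.eventually_gt_atTop 0,
      hφ.eventually (eventually_le_nhds (by linarith : ρ < ρ + ε)),
      hMf.eventually_gt_atTop 0,
      hu.eventually P1,
      hv.eventually_ge_atTop (Real.exp^[p] 1)] with σ h1 h2 h3 h4 h5
    obtain ⟨hP1a, hP1b, hP1c⟩ := h4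
    have hwfb : Real.log^[m] (h.Minv (f.M σ)) ≤ (ρ + ε) * Real.log^[q] σ := by
      rw [div_le_iff₀ h1] at h2
      linarith [h2]
    have hulog : Real.log^[p] (u σ) = α * Real.log^[q] σ := logIter_exp p _
    rw [hulog] at hP1a
    have hclaim : f.M σ ≤ g.M (u σ) := by
      by_contra hcon
      push_neg at hcon
      have hmono : h.Minv (g.M (u σ)) ≤ h.Minv (f.M σ) := h.Minv_mono hMh hP1c hcon.le
      have hlog : Real.log^[m] (h.Minv (g.M (u σ))) ≤ Real.log^[m] (h.Minv (f.M σ)) :=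
        logIter_le_logIter m hP1b hmono
      nlinarith [hP1a, hwfb, hlog, h1, hεpos, hαe]
    have hvle : g.Minv (f.M σ) ≤ u σ := g.Minv_le h3 hclaim
    have hfinal : Real.log^[p] (g.Minv (f.M σ)) ≤ α * Real.log^[q] σ := by
      have := logIter_le_logIter p h5 hvle
      rwa [hulog] at this
    have : Real.log^[p] (g.Minv (f.M σ)) / Real.log^[q] σ ≤ α := by
      rw [div_le_iff₀ h1]
      linarith
    linarith

end VVDS

theorem stmt_4 (f : VVDS E) (g : VVDS F) (h : VVDS G) (p q m : ℕ)
    (hf1 : (0 : EReal) < relRittLowerOrder m q f h)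
    (hfr : relRittLowerOrder m q f h = relRittOrder m q f h)
    (hf3 : relRittOrder m q f h < ⊤)
    (hg1 : (0 : EReal) < relRittLowerOrder m p g h)
    (hgr : relRittLowerOrder m p g h = relRittOrder m p g h)
    (hg3 : relRittOrder m p g h < ⊤)
    (hfg : relRittOrder m q f h = relRittOrder m p g h)
    :
    relRittLowerOrder p q f g = relRittOrder p q f g ∧ relRittOrder p q f g = relRittLowerOrder q p g f ∧ relRittLowerOrder q p g f = relRittOrder q p g f ∧ relRittOrder q p g f = 1 := by
  set c : EReal := relRittOrder m q f h with hc
  have hc0 : (0:EReal) < c := hfr ▸ hf1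
  have hcT : c ≠ ⊤ := hf3.ne
  have hcB : c ≠ ⊥ := by
    intro hb
    rw [hb] at hc0
    exact not_lt_bot hc0
  set ρ : ℝ := c.toReal with hρdef
  have hcoe : (ρ : EReal) = c := EReal.coe_toReal hcT hcB
  have hρ : 0 < ρ := by
    have := hc0
    rw [← hcoe] at this
    exact_mod_cast this
  have hφE : Tendsto (fun σ : ℝ =>
      ((Real.log^[m] (h.Minv (f.M σ)) / Real.log^[q] σ : ℝ) : EReal)) atTop (𝓝 c) := by
    apply tendsto_of_liminf_eq_limsup
    · exact hfr
    · rfl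
    · exact Filter.isBounded_le_of_top
    · exact Filter.isBounded_ge_of_bot
  have hψE : Tendsto (fun σ : ℝ =>
      ((Real.log^[m] (h.Minv (g.M σ)) / Real.log^[p] σ : ℝ) : EReal)) atTop (𝓝 c) := by
    apply tendsto_of_liminf_eq_limsup
    · exact hgr.trans hfg.symm
    · exact hfg.symm
    · exact Filter.isBounded_le_of_top
    · exact Filter.isBounded_ge_of_bot
  have hφ : Tendsto (fun σ : ℝ =>
      Real.log^[m] (h.Minv (f.M σ)) / Real.log^[q] σ) atTop (𝓝 ρ) := by
    rw [← hcoe] at hφE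
    exact EReal.tendsto_coe.1 hφE
  have hψ : Tendsto (fun σ : ℝ =>
      Real.log^[m] (h.Minv (g.M σ)) / Real.log^[p] σ) atTop (𝓝 ρ) := by
    rw [← hcoe] at hψE
    exact EReal.tendsto_coe.1 hψE
  have hFG := VVDS.key_tendsto f g h p q m hρ hφ hψ
  have hGF := VVDS.key_tendsto g f h q p m hρ hψ hφ
  have hFGE : Tendsto (fun σ : ℝ =>
      ((Real.log^[p] (g.Minv (f.M σ)) / Real.log^[q] σ : ℝ) : EReal)) atTop (𝓝 (1:EReal)) := by
    rw [show (1:EReal) = ((1:ℝ):EReal) from EReal.coe_one.symm]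
    exact EReal.tendsto_coe.2 hFG
  have hGFE : Tendsto (fun σ : ℝ =>
      ((Real.log^[q] (f.Minv (g.M σ)) / Real.log^[p] σ : ℝ) : EReal)) atTop (𝓝 (1:EReal)) := by
    rw [show (1:EReal) = ((1:ℝ):EReal) from EReal.coe_one.symm]
    exact EReal.tendsto_coe.2 hGF
  have o1 : relRittOrder p q f g = 1 := hFGE.limsup_eq
  have l1 : relRittLowerOrder p q f g = 1 := hFGE.liminf_eq
  have o2 : relRittOrder q p g f = 1 := hGFE.limsup_eq
  have l2 : relRittLowerOrder q p g f = 1 := hGFE.liminf_eq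
  exact ⟨l1.trans o1.symm, o1.trans l2.symm, l2.trans o2.symm, o2⟩
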